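/- arXiv:2108.05741 — 3 statements merged into one kernel-verified Lean document; each statement's English description precedes it below -/
import Mathlib

section
/- Let $a > 1$ and $\theta \in (0,\pi)$. Define $\epsilon(a,\theta) = \frac{\cos\theta + \sqrt{\cos^2\theta + 4a(a-1)}}{2a}$ and, for $\epsilon' \in \{+1,-1\}$, $H(a,\theta) = -\frac{1}{2a} - \epsilon'\sqrt{1 - \cos\theta\,\frac{\cos\theta + \sqrt{4a^2-4a+\cos^2\theta}}{2a}}$. Then $\frac{\partial H}{\partial a}(a,\theta) \neq 0$. -/
open Real

set_option maxHeartbeats 1000000 in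
lemma key (a c s w : ℝ) (ha : 1 < a) (hc1 : c < 1) (hc2 : -1 < c)
    (hs : 0 < s) (hs2 : s^2 = 4*a^2 - 4*a + c^2)
    (hw : 0 ≤ w) (hw2 : w^2 = 1 - c*((c+s)/(2*a))) :
    a^2*c^2*w^2 < s^2 := by
  have ha0 : (0:ℝ) < a := by linarith
  have hcc : c^2 < 1 := by
    nlinarith [mul_pos (sub_pos.2 hc1) (by linarith : (0:ℝ) < 1 + c)]
  have hg : 2*a*w^2 = 2*a - c^2 - c*s := by
    field_simp at hw2; nlinarith [hw2]
  have hsge : 2*(a-1) < s := by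
    nlinarith [sq_nonneg (s - 2*(a-1))]
  rcases le_or_gt 0 c with hc | hc
  · have h4 : c^2*(a+1) < 4*a := by
      nlinarith [mul_lt_mul_of_pos_right hcc (by linarith : (0:ℝ) < a + 1)]
    have key2 : 0 < 2*a*s^2 - 2*a*(a^2*c^2*w^2) := by
      nlinarith [mul_pos (mul_pos (mul_pos two_pos ha0) (sub_pos.2 ha)) (sub_pos.2 h4),
        mul_nonneg (mul_nonneg (mul_nonneg (sq_nonneg a) hc) (sq_nonneg c)) hs.le,
        mul_nonneg (sq_nonneg (a*c^2)) hc, sq_nonneg (a*c), mul_pos ha0 ha0]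
    nlinarith [key2]
  · set t := -c with ht
    have ht0 : 0 < t := by simp [ht]; linarith
    have ht1 : t < 1 := by simp only [ht]; linarith
    have htt : t^2 < 1 := by nlinarith
    have hst : (s - t)*(s + t) = 4*a*(a-1) := by nlinarith [hs2]
    have hfac : 0 < 4*a - t^2*(a+1) := by
      nlinarith [mul_lt_mul_of_pos_right htt (by linarith : (0:ℝ) < a + 1)]
    have hQ : 0 < (4*a - t^2*(a+1))*(2*(a-1)+t) - 2*a^2*t^3 := by
      nlinarith [mul_pos ht0 (by nlinarith : (0:ℝ) < 1 - t^2),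
        mul_nonneg (sub_pos.2 ha).le (mul_nonneg ht0.le (sub_pos.2 ht1).le),
        mul_nonneg (sub_pos.2 ha).le (by nlinarith : (0:ℝ) ≤ 1 - t^3),
        mul_nonneg (mul_nonneg (sub_pos.2 ha).le (sub_pos.2 ha).le) (by nlinarith : (0:ℝ) ≤ 1 - t^3)]
    have hbr : 0 < (4*a - t^2*(a+1))*(s+t) - 2*a^2*t^3 := by
      have h5 := mul_lt_mul_of_pos_left (by linarith : 2*(a-1)+t < s+t) hfac
      linarith [hQ, h5]
    have hDst : 2*a*(s^2 - a^2*c^2*w^2)*(s+t) =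
        2*a*(a-1)*((4*a - t^2*(a+1))*(s+t) - 2*a^2*t^3) := by
      simp only [ht]
      linear_combination (-(a^2*c^2*(s - c))) * hg + (2*a*s - 2*a*c + a^2*c^3) * hs2
    have hpos : 0 < 2*a*(s^2 - a^2*c^2*w^2)*(s+t) := by
      rw [hDst]
      have h6 : (0:ℝ) < a - 1 := by linarith
      positivity
    have hspt : 0 < s + t := by nlinarith
    nlinarith [hpos, mul_pos (mul_pos two_pos ha0) hspt]
open Real

/-- Nondegeneracy of S-arcs: the derivative of the rotating Kepler energy with
respect to the semi-major axis never vanishes for `a > 1`, `θ ∈ (0,π)`. -/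
theorem stmt_2 (a θ ε' : ℝ) (ha : 1 < a) (hθ0 : 0 < θ) (hθπ : θ < Real.pi)
    (hε : ε' = 1 ∨ ε' = -1) :
    deriv (fun x : ℝ =>
      -(1 / (2 * x)) - ε' * Real.sqrt
        (1 - Real.cos θ *
          ((Real.cos θ + Real.sqrt (4 * x ^ 2 - 4 * x + Real.cos θ ^ 2)) / (2 * x)))) a
      ≠ 0 := by
  have ha0 : (0:ℝ) < a := by linarith
  set c := Real.cos θ with hcdef
  have hc1 : c < 1 := by
    have h := Real.cos_lt_cos_of_nonneg_of_le_pi le_rfl hθπ.le hθ0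
    simpa using h
  have hc2 : -1 < c := by
    have h := Real.cos_lt_cos_of_nonneg_of_le_pi hθ0.le le_rfl hθπ
    simpa using h
  have hu : (0:ℝ) < 4*a^2 - 4*a + c^2 := by nlinarith [sq_nonneg c]
  set s := Real.sqrt (4*a^2 - 4*a + c^2) with hsdef
  have hs : 0 < s := Real.sqrt_pos.2 hu
  have hs2 : s^2 = 4*a^2 - 4*a + c^2 := Real.sq_sqrt hu.le
  have hslt : s < 2*a - c := by
    apply lt_of_pow_lt_pow_left₀ 2 (by linarith)
    nlinarith
  have hnum : 0 < 2*a - c^2 - c*s := by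
    rcases le_or_gt 0 c with h | h
    · nlinarith [mul_le_mul_of_nonneg_left hslt.le h]
    · nlinarith [mul_pos (neg_pos.2 h) hs]
  have hg0 : 0 < 1 - c * ((c + s) / (2*a)) := by
    have he : 1 - c * ((c + s) / (2*a)) = (2*a - c^2 - c*s) / (2*a) := by
      field_simp; ring
    rw [he]; positivity
  set w := Real.sqrt (1 - c * ((c + s) / (2*a))) with hwdef
  have hw : 0 < w := Real.sqrt_pos.2 hg0
  have hw2 : w^2 = 1 - c * ((c + s) / (2*a)) := Real.sq_sqrt hg0.le
  -- derivative computation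
  have h1 : HasDerivAt (fun x : ℝ => 4*x^2 - 4*x + c^2) (8*a - 4) a := by
    have h := (((hasDerivAt_pow 2 a).const_mul (4:ℝ)).sub
      ((hasDerivAt_id a).const_mul (4:ℝ))).add_const (c^2)
    refine h.congr_deriv ?_
    push_cast
    ring
  have h2 : HasDerivAt (fun x : ℝ => Real.sqrt (4*x^2 - 4*x + c^2))
      ((8*a - 4) / (2*s)) a := h1.sqrt hu.ne'
  have hd : HasDerivAt (fun x : ℝ => 2*x) (2:ℝ) a := by
    simpa using (hasDerivAt_id a).const_mul (2:ℝ)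
  have h3 : HasDerivAt (fun x : ℝ => (c + Real.sqrt (4*x^2 - 4*x + c^2)) / (2*x))
      (((8*a - 4) / (2*s) * (2*a) - (c + s) * 2) / (2*a)^2) a :=
    (h2.const_add c).div hd (by positivity)
  have h4 : HasDerivAt (fun x : ℝ => 1 - c * ((c + Real.sqrt (4*x^2 - 4*x + c^2)) / (2*x)))
      (-(c * (((8*a - 4) / (2*s) * (2*a) - (c + s) * 2) / (2*a)^2))) a :=
    (h3.const_mul c).const_sub 1
  have h5 : HasDerivAt (fun x : ℝ =>
      Real.sqrt (1 - c * ((c + Real.sqrt (4*x^2 - 4*x + c^2)) / (2*x))))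
      ((-(c * (((8*a - 4) / (2*s) * (2*a) - (c + s) * 2) / (2*a)^2))) / (2*w)) a :=
    h4.sqrt hg0.ne'
  have h6 : HasDerivAt (fun x : ℝ => -(1 / (2*x)))
      (-((0 * (2*a) - 1 * 2) / (2*a)^2)) a :=
    ((hasDerivAt_const a (1:ℝ)).div hd (by positivity)).neg
  have hf : HasDerivAt (fun x : ℝ =>
      -(1 / (2 * x)) - ε' * Real.sqrt
        (1 - c * ((c + Real.sqrt (4 * x ^ 2 - 4 * x + c ^ 2)) / (2 * x))))
      (-((0 * (2*a) - 1 * 2) / (2*a)^2)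
        - ε' * ((-(c * (((8*a - 4) / (2*s) * (2*a) - (c + s) * 2) / (2*a)^2))) / (2*w))) a :=
    h6.sub (h5.const_mul ε')
  rw [hf.deriv]
  intro h0
  field_simp at h0
  have hg : 2*a*w^2 = 2*a - c^2 - c*s := by
    rw [hw2]; field_simp; ring
  have h8 : 32*a^2*w*(s + ε'*(a*c*w)) = 0 := by
    linear_combination (8*a^2) * h0 + (16*a^2*ε'*c) * hs2 + (16*a^2*ε'*c) * hg
  have hne : (32:ℝ)*a^2*w ≠ 0 := by positivity
  have h9 : s + ε'*(a*c*w) = 0 := (mul_eq_zero.1 h8).resolve_left hne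
  have hkey := key a c s w ha hc1 hc2 hs hs2 hw.le hw2
  rcases hε with h | h <;> subst h
  · have hacw : a*c*w = -s := by linarith
    have h11 : a^2*c^2*w^2 = s^2 := by linear_combination (a*c*w - s) * hacw
    linarith
  · have hacw : a*c*w = s := by linarith
    have h11 : a^2*c^2*w^2 = s^2 := by linear_combination (a*c*w + s) * hacw
    linarith
end

section
/- For $\theta = \pi$ (type 2 arcs, full Kepler ellipses tangent internally to the unit circle) with semi-major axis $a > 1$ and direction of rotation $\epsilon' \in \{\pm 1\}$, the action is $\mathcal{A}(a) = 2\pi\sqrt{a} - 2\pi\epsilon' a\sqrt{2a-1}$; this is positive for all $a > 1$ when $\epsilon' = -1$ and negative for all $a > 1$ when $\epsilon' = +1$. -/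
open Real

/-- Action of type 2 arcs (`θ = π`): `𝒜(a) = 2π√a - 2πε'a√(2a-1)` is positive
for `ε' = -1` and negative for `ε' = +1`, for all `a > 1`. -/
theorem stmt_11 (a ε' : ℝ) (ha : 1 < a) (hε : ε' = 1 ∨ ε' = -1) :
    (ε' = -1 →
      0 < 2 * Real.pi * Real.sqrt a - 2 * Real.pi * ε' * a * Real.sqrt (2 * a - 1)) ∧
    (ε' = 1 →
      2 * Real.pi * Real.sqrt a - 2 * Real.pi * ε' * a * Real.sqrt (2 * a - 1) < 0) := by
  have ha0 : 0 < a := lt_trans one_pos ha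
  have hsa : 0 < Real.sqrt a := Real.sqrt_pos.mpr ha0
  have h1 : (1:ℝ) ≤ Real.sqrt (2 * a - 1) := by
    nlinarith [Real.sq_sqrt (show (0:ℝ) ≤ 2*a-1 by linarith), Real.sqrt_nonneg (2*a-1)]
  have hsalt : Real.sqrt a < a := by
    nlinarith [Real.sq_sqrt ha0.le, Real.sqrt_nonneg a]
  have key : Real.sqrt a < a * Real.sqrt (2 * a - 1) := by
    calc Real.sqrt a < a := hsalt
      _ = a * 1 := (mul_one a).symm
      _ ≤ a * Real.sqrt (2 * a - 1) := by nlinarith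
  have hpi := Real.pi_pos
  constructor
  · intro h; subst h
    have h2 : 0 ≤ a * Real.sqrt (2 * a - 1) := by positivity
    nlinarith
  · intro h; subst h
    nlinarith
end

section
/- For $\theta = 0$ (rectilinear limiting case), the action $\mathcal{A}(a) = 4\sqrt{a}\arccos\left(\sqrt{\frac{1}{2a}}\right) - 2\sqrt{2 - \frac{1}{a}}$ is nonnegative for all $a \geq 1$. -/
open Real

/-- In the rectilinear limiting case `θ = 0` the action
`𝒜(a) = 4√a · arccos(√(1/(2a))) - 2√(2 - 1/a)` is nonnegative for all `a ≥ 1`. -/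
theorem stmt_12 (a : ℝ) (ha : 1 ≤ a) :
    0 ≤ 4 * Real.sqrt a * Real.arccos (Real.sqrt (1 / (2 * a)))
        - 2 * Real.sqrt (2 - 1 / a) := by
  have ha0 : (0:ℝ) < a := lt_of_lt_of_le one_pos ha
  have h1 : Real.sqrt (2 - 1 / a) ≤ Real.sqrt 2 := by
    apply Real.sqrt_le_sqrt
    have : 0 < 1 / a := by positivity
    linarith
  have h2 : Real.sqrt 2 * 2 ≤ π := by
    nlinarith [Real.pi_gt_d6, Real.sq_sqrt (by norm_num : (2:ℝ) ≥ 0),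
      Real.sqrt_nonneg 2]
  have harc : π / 4 ≤ Real.arccos (Real.sqrt (1 / (2 * a))) := by
    have hx : Real.sqrt (1 / (2 * a)) ≤ Real.sqrt 2 / 2 := by
      have hinv : Real.sqrt 2 / 2 = Real.sqrt (1/2) := by
        rw [show (1/2:ℝ) = 2⁻¹ by norm_num, Real.sqrt_inv]
        rw [eq_comm, inv_eq_iff_eq_inv, eq_comm, inv_div]
        rw [div_eq_iff (by positivity : (0:ℝ) < Real.sqrt 2).ne']
        nlinarith [Real.sq_sqrt (by norm_num : (0:ℝ) ≤ 2)]
      rw [hinv]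
      apply Real.sqrt_le_sqrt
      rw [div_le_div_iff₀ (by positivity) (by norm_num)]
      linarith
    calc π / 4 = Real.arccos (Real.sqrt 2 / 2) := by
          rw [show Real.sqrt 2 / 2 = Real.cos (π/4) by rw [Real.cos_pi_div_four]]
          rw [Real.arccos_cos (by positivity) (by linarith [Real.pi_pos])]
      _ ≤ _ := by
          rw [Real.arccos, Real.arccos]
          have := Real.monotone_arcsin hx
          linarith
  have hsa : (1:ℝ) ≤ Real.sqrt a := by
    rw [show (1:ℝ) = Real.sqrt 1 from (Real.sqrt_one).symm]
    exact Real.sqrt_le_sqrt ha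
  have harcnn : 0 ≤ Real.arccos (Real.sqrt (1 / (2 * a))) := Real.arccos_nonneg _
  nlinarith [mul_le_mul hsa harc (by linarith [Real.pi_pos]) (by linarith)]
end
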